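/- Fix μ > 0 and 0 < c < c*(μ), and let t_c ∈ ]-μ, 0[ satisfy e^{2t_c}(t_c + cμ² - 1) + t_c + cμ² + 1 = 0. Set α_c = -e^{-μ}/(2μ² cosh t_c) and define h̃_c(s) = μ²α_c e^{2s} + (1 - 2μ²α_c) e^s - s + μ²α_c - cμ² - 1. Then h̃_c(t_c + μ) = -μ + sinh(μ)/cosh(t_c). -/

import Mathlib

theorem stmt_11 (μ c cstar t α : ℝ) (hμ : 0 < μ)
    (hcs : cstar = -(1 / μ ^ 2) *
      (Real.log ((Real.sinh μ / μ) * (1 - Real.sqrt (1 - μ ^ 2 / Real.sinh μ ^ 2)))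
        + Real.sqrt (1 - μ ^ 2 / Real.sinh μ ^ 2)))
    (hc : 0 < c) (hcc : c < cstar)
    (ht : t ∈ Set.Ioo (-μ) 0)
    (hteq : Real.exp (2 * t) * (t + c * μ ^ 2 - 1) + t + c * μ ^ 2 + 1 = 0)
    (hα : α = -Real.exp (-μ) / (2 * μ ^ 2 * Real.cosh t))
    (htilde : ℝ → ℝ)
    (hht : ∀ s, htilde s = μ ^ 2 * α * Real.exp (2 * s) + (1 - 2 * μ ^ 2 * α) * Real.exp s
      - s + μ ^ 2 * α - c * μ ^ 2 - 1) :
    htilde (t + μ) = -μ + Real.sinh μ / Real.cosh t := by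
  have hμ0 : μ ≠ 0 := ne_of_gt hμ
  have het : Real.exp t ≠ 0 := Real.exp_ne_zero t
  have heu : Real.exp μ ≠ 0 := Real.exp_ne_zero μ
  have h2t : Real.exp (2 * t) = Real.exp t * Real.exp t := by
    rw [two_mul, Real.exp_add]
  have hc2 : (t + c * μ ^ 2) * (Real.exp t * Real.exp t + 1) = Real.exp t * Real.exp t - 1 := by
    rw [← h2t]; linear_combination hteq
  have h2tm : Real.exp (2 * (t + μ)) = Real.exp t * Real.exp t * Real.exp μ * Real.exp μ := by
    rw [show 2 * (t + μ) = t + t + (μ + μ) by ring, Real.exp_add, Real.exp_add, Real.exp_add]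
    ring
  have htm : Real.exp (t + μ) = Real.exp t * Real.exp μ := Real.exp_add t μ
  rw [hht, hα, Real.cosh_eq, Real.sinh_eq, h2tm, htm, Real.exp_neg t, Real.exp_neg μ]
  field_simp
  linear_combination (-(Real.exp μ)) * hc2
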